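/- Let Y be a nonnegative random variable with regularly varying tail of index α > 1, and let a_n = inf{x ≥ 0 : P(Y ≤ x) ≥ 1 − 1/n}. Then for every constant c > 0, lim_{n→∞} n · E( Y·1{Y > c a_n} ) / a_n = (α/(α−1)) · c^{1−α}. -/

import Mathlib

open MeasureTheory Filter Set


lemma aux_exists_params (α δ : ℝ) (hα : 1 < α) (hδ : 0 < δ) :
    ∃ r q₁ q₂ : ℝ, 1 < r ∧ r ^ (-α) < q₁ ∧ 0 < q₂ ∧ q₂ < r ^ (-α) ∧ r * q₁ < 1 ∧
      (r - 1) / (1 - r * q₁) ≤ (α - 1)⁻¹ + δ ∧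
      (α - 1)⁻¹ - δ ≤ (r - 1) * q₂ / (1 - r * q₂) := by
  have hα1 : (0:ℝ) < α - 1 := by linarith
  set L : ℝ := (α - 1)⁻¹ with hL
  have hderiv : HasDerivAt (fun r : ℝ => r ^ (1 - α)) ((1 - α) * (1:ℝ) ^ (1 - α - 1)) 1 :=
    Real.hasDerivAt_rpow_const (Or.inl one_ne_zero)
  have hslope : Tendsto (fun r : ℝ => (r ^ (1 - α) - 1) / (r - 1)) (nhdsWithin 1 {(1:ℝ)}ᶜ)
      (nhds (1 - α)) := by
    have h := hasDerivAt_iff_tendsto_slope.1 hderiv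
    rw [show (1 - α) * (1:ℝ) ^ (1 - α - 1) = 1 - α by simp [Real.one_rpow]] at h
    refine Tendsto.congr (fun r => ?_) h
    simp [slope_fun_def, Real.one_rpow]
    ring
  have h2 : Tendsto (fun r : ℝ => (1 - r ^ (1 - α)) / (r - 1)) (nhdsWithin 1 {(1:ℝ)}ᶜ)
      (nhds (α - 1)) := by
    have h := hslope.neg
    rw [show -(1 - α) = α - 1 by ring] at h
    exact h.congr fun r => by ring
  have hφ : Tendsto (fun r : ℝ => (r - 1) / (1 - r ^ (1 - α))) (nhdsWithin 1 (Ioi (1:ℝ)))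
      (nhds L) := by
    have h := (h2.inv₀ (by positivity)).mono_left
      (nhdsWithin_mono _ (by intro x hx; exact ne_of_gt hx))
    exact h.congr fun r => by rw [inv_div]
  have hrpow1 : Tendsto (fun r : ℝ => r ^ (-α)) (nhdsWithin 1 (Ioi (1:ℝ))) (nhds 1) := by
    have h : ContinuousAt (fun r : ℝ => r ^ (-α)) 1 :=
      Real.continuousAt_rpow_const 1 (-α) (Or.inl one_ne_zero)
    have := tendsto_nhdsWithin_of_tendsto_nhds (s := Ioi (1:ℝ)) h.tendsto
    simpa [Real.one_rpow] using this
  have hψ : Tendsto (fun r : ℝ => (r - 1) / (1 - r ^ (1 - α)) * r ^ (-α))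
      (nhdsWithin 1 (Ioi (1:ℝ))) (nhds L) := by
    simpa using hφ.mul hrpow1
  have hev : ∀ᶠ r in nhdsWithin 1 (Ioi (1:ℝ)),
      1 < r ∧ (r - 1) / (1 - r ^ (1 - α)) < L + δ/2 ∧
        L - δ/2 < (r - 1) / (1 - r ^ (1 - α)) * r ^ (-α) := by
    filter_upwards [eventually_mem_nhdsWithin, hφ.eventually_lt_const (show L < L + δ/2 by linarith),
      hψ.eventually_const_lt (show L - δ/2 < L by linarith)] with r h1 h2 h3
    exact ⟨h1, h2, h3⟩
  obtain ⟨r, hr1, hφr, hψr⟩ := hev.exists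
  set b : ℝ := r ^ (-α) with hb
  have hr0 : (0:ℝ) < r := by linarith
  have hb0 : 0 < b := Real.rpow_pos_of_pos hr0 _
  have hrb : r * b = r ^ (1 - α) := by
    rw [hb, show (1 : ℝ) - α = 1 + (-α) by ring, Real.rpow_add hr0, Real.rpow_one]
  have hrb1 : r ^ (1 - α) < 1 :=
    Real.rpow_lt_one_of_one_lt_of_neg hr1 (by linarith)
  have hden : (0:ℝ) < 1 - r * b := by rw [hrb]; linarith
  -- choose q₁ slightly above b
  have hf : ContinuousAt (fun q : ℝ => (r - 1) / (1 - r * q)) b := by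
    exact ContinuousAt.div continuousAt_const (by fun_prop) (ne_of_gt hden)
  have hfb : (r - 1) / (1 - r * b) < L + δ := by rw [hrb]; linarith
  have hg : ContinuousAt (fun q : ℝ => r * q) b := by fun_prop
  have hq1 : ∃ q₁, b < q₁ ∧ r * q₁ < 1 ∧ (r - 1) / (1 - r * q₁) < L + δ := by
    have e1 := (tendsto_nhdsWithin_of_tendsto_nhds (s := Ioi b) hf.tendsto).eventually_lt_const hfb
    have e2 := (tendsto_nhdsWithin_of_tendsto_nhds (s := Ioi b) hg.tendsto).eventually_lt_const
      (by rw [hrb]; linarith : r * b < 1)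
    obtain ⟨q, hq, h1, h2⟩ := (eventually_mem_nhdsWithin.and (e1.and e2)).exists
    exact ⟨q, hq, h2, h1⟩
  -- choose q₂ slightly below b
  have hg2 : ContinuousAt (fun q : ℝ => (r - 1) * q / (1 - r * q)) b := by
    exact ContinuousAt.div (by fun_prop) (by fun_prop) (ne_of_gt hden)
  have hgb : L - δ < (r - 1) * b / (1 - r * b) := by
    rw [hrb]
    have : (r - 1) / (1 - r ^ (1 - α)) * b = (r - 1) * b / (1 - r ^ (1 - α)) := by ring
    rw [this] at hψr; linarith
  have hq2 : ∃ q₂, 0 < q₂ ∧ q₂ < b ∧ L - δ < (r - 1) * q₂ / (1 - r * q₂) := by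
    have e1 := (tendsto_nhdsWithin_of_tendsto_nhds (s := Iio b) hg2.tendsto).eventually_const_lt hgb
    have e2 : Ioo (b/2) b ∈ nhdsWithin b (Iio b) := Ioo_mem_nhdsLT (by linarith)
    obtain ⟨q, hq, h1⟩ := (((eventually_mem_nhdsWithin.and e1).and e2)).exists
    exact ⟨q, by linarith [h1.1, h1.2], h1.2, hq.2⟩
  obtain ⟨q₁, hq1b, hrq1, hfq1⟩ := hq1
  obtain ⟨q₂, hq20, hq2b, hgq2⟩ := hq2
  exact ⟨r, q₁, q₂, hr1, hq1b, hq20, hq2b, hrq1, le_of_lt hfq1, le_of_lt hgq2⟩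

lemma piece_ub (U : ℝ → ℝ) (hanti : Antitone U) {a b : ℝ} :
    ∫⁻ t in Ioc a b, ENNReal.ofReal (U t) ≤ ENNReal.ofReal (U a) * ENNReal.ofReal (b - a) := by
  calc ∫⁻ t in Ioc a b, ENNReal.ofReal (U t)
      ≤ ∫⁻ _ in Ioc a b, ENNReal.ofReal (U a) :=
        setLIntegral_mono measurable_const
          (fun t ht => ENNReal.ofReal_le_ofReal (hanti ht.1.le))
    _ = ENNReal.ofReal (U a) * ENNReal.ofReal (b - a) := by
        rw [setLIntegral_const, Real.volume_Ioc]

lemma piece_lb (U : ℝ → ℝ) (hmeas : Measurable U) (hanti : Antitone U) {a b : ℝ} :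
    ENNReal.ofReal (U b) * ENNReal.ofReal (b - a) ≤ ∫⁻ t in Ioc a b, ENNReal.ofReal (U t) := by
  calc ENNReal.ofReal (U b) * ENNReal.ofReal (b - a)
      = ∫⁻ _ in Ioc a b, ENNReal.ofReal (U b) := by
        rw [setLIntegral_const, Real.volume_Ioc]
    _ ≤ ∫⁻ t in Ioc a b, ENNReal.ofReal (U t) :=
        setLIntegral_mono (ENNReal.measurable_ofReal.comp hmeas)
          (fun t ht => ENNReal.ofReal_le_ofReal (hanti ht.2))

lemma aux_TE_bounds (U : ℝ → ℝ) (hmeas : Measurable U) (hanti : Antitone U)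
    (h0 : ∀ x, 0 ≤ U x) (r q₁ q₂ X : ℝ) (hr : 1 < r) (hq₁ : 0 < q₁) (hrq₁ : r * q₁ < 1)
    (hq₂ : 0 < q₂) (hrq₂ : r * q₂ < 1) (hX : 0 < X)
    (hub : ∀ x, X ≤ x → U (r * x) ≤ q₁ * U x)
    (hlb : ∀ x, X ≤ x → q₂ * U x ≤ U (r * x)) :
    ∀ x, X ≤ x →
      ENNReal.ofReal ((r - 1) * q₂ / (1 - r * q₂) * (x * U x)) ≤
        (∫⁻ t in Ioi x, ENNReal.ofReal (U t)) ∧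
      (∫⁻ t in Ioi x, ENNReal.ofReal (U t)) ≤
        ENNReal.ofReal ((r - 1) / (1 - r * q₁) * (x * U x)) := by
  intro x hx
  have hx0 : 0 < x := lt_of_lt_of_le hX hx
  have hr0 : (0 : ℝ) < r := by linarith
  have hrk : ∀ k : ℕ, x ≤ r ^ k * x := fun k =>
    le_mul_of_one_le_left hx0.le (one_le_pow₀ hr.le)
  have hrkX : ∀ k : ℕ, X ≤ r ^ k * x := fun k => le_trans hx (hrk k)
  have hrkmono : ∀ k : ℕ, r ^ k * x ≤ r ^ (k + 1) * x := by
    intro k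
    have h1 : (0:ℝ) < r ^ k := pow_pos hr0 k
    rw [pow_succ]
    nlinarith [mul_pos h1 hx0]
  have hkey : ∀ k : ℕ, r ^ (k + 1) * x = r * (r ^ k * x) := by
    intro k; ring
  -- chaining
  have hchain_ub : ∀ k : ℕ, U (r ^ k * x) ≤ q₁ ^ k * U x := by
    intro k
    induction k with
    | zero => simp
    | succ k ih =>
      rw [hkey k]
      calc U (r * (r ^ k * x)) ≤ q₁ * U (r ^ k * x) := hub _ (hrkX k)
        _ ≤ q₁ * (q₁ ^ k * U x) := by nlinarith
        _ = q₁ ^ (k + 1) * U x := by ring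
  have hchain_lb : ∀ k : ℕ, q₂ ^ k * U x ≤ U (r ^ k * x) := by
    intro k
    induction k with
    | zero => simp
    | succ k ih =>
      rw [hkey k]
      calc q₂ ^ (k + 1) * U x = q₂ * (q₂ ^ k * U x) := by ring
        _ ≤ q₂ * U (r ^ k * x) := by nlinarith
        _ ≤ U (r * (r ^ k * x)) := hlb _ (hrkX k)
  have hD1 : (0:ℝ) ≤ (r - 1) * (x * U x) :=
    mul_nonneg (by linarith) (mul_nonneg hx0.le (h0 x))
  have hD2 : (0:ℝ) ≤ q₂ * (r - 1) * (x * U x) :=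
    mul_nonneg (mul_nonneg hq₂.le (by linarith)) (mul_nonneg hx0.le (h0 x))
  constructor
  · -- lower bound
    have hsplit : ∀ n : ℕ, ∫⁻ t in Ioc x (r ^ n * x), ENNReal.ofReal (U t) =
        ∑ k ∈ Finset.range n, ∫⁻ t in Ioc (r ^ k * x) (r ^ (k + 1) * x), ENNReal.ofReal (U t) := by
      intro n
      induction n with
      | zero => simp
      | succ n ih =>
        rw [← Set.Ioc_union_Ioc_eq_Ioc (hrk n) (hrkmono n),
          lintegral_union measurableSet_Ioc (Set.Ioc_disjoint_Ioc_of_le le_rfl),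
          Finset.sum_range_succ, ih]
    have hterm : ∀ k : ℕ,
        ENNReal.ofReal (q₂ * (r - 1) * (x * U x)) * (ENNReal.ofReal (r * q₂)) ^ k ≤
          ∫⁻ t in Ioc (r ^ k * x) (r ^ (k + 1) * x), ENNReal.ofReal (U t) := by
      intro k
      refine le_trans ?_ (piece_lb U hmeas hanti)
      rw [← ENNReal.ofReal_pow (mul_nonneg hr0.le hq₂.le), ← ENNReal.ofReal_mul hD2,
        ← ENNReal.ofReal_mul (h0 _)]
      apply ENNReal.ofReal_le_ofReal
      have e : r ^ (k + 1) * x - r ^ k * x = r ^ k * x * (r - 1) := by ring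
      rw [e]
      have h1 : q₂ ^ (k + 1) * U x ≤ U (r ^ (k + 1) * x) := hchain_lb (k + 1)
      have h2 : (0:ℝ) ≤ r ^ k * x * (r - 1) :=
        mul_nonneg (mul_nonneg (pow_pos hr0 k).le hx0.le) (by linarith)
      calc q₂ * (r - 1) * (x * U x) * (r * q₂) ^ k
          = (q₂ ^ (k + 1) * U x) * (r ^ k * x * (r - 1)) := by rw [mul_pow]; ring
        _ ≤ U (r ^ (k + 1) * x) * (r ^ k * x * (r - 1)) :=
            mul_le_mul_of_nonneg_right h1 h2
    have hofReal : ENNReal.ofReal ((r - 1) * q₂ / (1 - r * q₂) * (x * U x)) =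
        ENNReal.ofReal (q₂ * (r - 1) * (x * U x)) * (1 - ENNReal.ofReal (r * q₂))⁻¹ := by

      rw [← ENNReal.ofReal_one, ← ENNReal.ofReal_sub _ (mul_nonneg hr0.le hq₂.le),
        ← ENNReal.ofReal_inv_of_pos (by linarith), ← ENNReal.ofReal_mul hD2]
      congr 1
      ring
    rw [hofReal, ← ENNReal.tsum_geometric, ← ENNReal.tsum_mul_left, ENNReal.tsum_eq_iSup_nat]
    refine iSup_le fun n => ?_
    calc ∑ k ∈ Finset.range n, ENNReal.ofReal (q₂ * (r - 1) * (x * U x)) * (ENNReal.ofReal (r * q₂)) ^ k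
        ≤ ∑ k ∈ Finset.range n, ∫⁻ t in Ioc (r ^ k * x) (r ^ (k + 1) * x), ENNReal.ofReal (U t) :=
          Finset.sum_le_sum fun k _ => hterm k
      _ = ∫⁻ t in Ioc x (r ^ n * x), ENNReal.ofReal (U t) := (hsplit n).symm
      _ ≤ ∫⁻ t in Ioi x, ENNReal.ofReal (U t) :=
          lintegral_mono_set (Set.Ioc_subset_Ioi_self)
  · -- upper bound
    have hcover : Ioi x ⊆ ⋃ k : ℕ, Ioc (r ^ k * x) (r ^ (k + 1) * x) := by
      intro t ht
      have ht' : x < t := ht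
      have hex : ∃ n : ℕ, t ≤ r ^ n * x := by
        obtain ⟨n, hn⟩ := pow_unbounded_of_one_lt (t / x) hr
        exact ⟨n, by rw [div_lt_iff₀ hx0] at hn; linarith⟩
      classical
      let m := Nat.find hex
      have hm : t ≤ r ^ m * x := Nat.find_spec hex
      have hm0 : m ≠ 0 := by
        intro h
        have := hm
        rw [h] at this
        simp at this
        linarith
      obtain ⟨k, hk⟩ := Nat.exists_eq_succ_of_ne_zero hm0
      have hlt : ¬ (t ≤ r ^ k * x) := Nat.find_min hex (by omega)
      refine mem_iUnion.2 ⟨k, ?_, ?_⟩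
      · push_neg at hlt; exact hlt
      · have hk' : m = k + 1 := hk
        rw [hk'] at hm; exact hm
    calc (∫⁻ t in Ioi x, ENNReal.ofReal (U t))
        ≤ ∫⁻ t in ⋃ k : ℕ, Ioc (r ^ k * x) (r ^ (k + 1) * x), ENNReal.ofReal (U t) :=
          lintegral_mono_set hcover
      _ ≤ ∑' k : ℕ, ∫⁻ t in Ioc (r ^ k * x) (r ^ (k + 1) * x), ENNReal.ofReal (U t) :=
          lintegral_iUnion_le _ _
      _ ≤ ∑' k : ℕ, ENNReal.ofReal ((r - 1) * (x * U x)) * (ENNReal.ofReal (r * q₁)) ^ k := by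
          refine ENNReal.tsum_le_tsum fun k => ?_
          refine le_trans (piece_ub U hanti) ?_
          rw [← ENNReal.ofReal_pow (mul_nonneg hr0.le hq₁.le), ← ENNReal.ofReal_mul hD1,
            ← ENNReal.ofReal_mul (h0 _)]
          apply ENNReal.ofReal_le_ofReal
          have e : r ^ (k + 1) * x - r ^ k * x = r ^ k * x * (r - 1) := by ring
          rw [e]
          have h2 : (0:ℝ) ≤ r ^ k * x * (r - 1) :=
            mul_nonneg (mul_nonneg (pow_pos hr0 k).le hx0.le) (by linarith)
          calc U (r ^ k * x) * (r ^ k * x * (r - 1))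
              ≤ (q₁ ^ k * U x) * (r ^ k * x * (r - 1)) :=
                mul_le_mul_of_nonneg_right (hchain_ub k) h2
            _ = (r - 1) * (x * U x) * (r * q₁) ^ k := by rw [mul_pow]; ring
      _ = ENNReal.ofReal ((r - 1) * (x * U x)) * (1 - ENNReal.ofReal (r * q₁))⁻¹ := by
          rw [ENNReal.tsum_mul_left, ENNReal.tsum_geometric]
      _ = ENNReal.ofReal ((r - 1) / (1 - r * q₁) * (x * U x)) := by
          rw [← ENNReal.ofReal_one, ← ENNReal.ofReal_sub _ (mul_nonneg hr0.le hq₁.le),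
            ← ENNReal.ofReal_inv_of_pos (by linarith), ← ENNReal.ofReal_mul hD1]
          congr 1
          ring

lemma aux_karamata (U : ℝ → ℝ) (hmeas : Measurable U) (hanti : Antitone U)
    (h0 : ∀ x, 0 ≤ U x) (hpos : ∀ x, 0 < x → 0 < U x) (α : ℝ) (hα : 1 < α)
    (hrv : ∀ t : ℝ, 0 < t → Tendsto (fun x : ℝ => U (t * x) / U x) atTop (nhds (t ^ (-α)))) :
    (∀ᶠ x in atTop, (∫⁻ t in Ioi x, ENNReal.ofReal (U t)) ≠ ⊤) ∧
    Tendsto (fun x : ℝ => (∫⁻ t in Ioi x, ENNReal.ofReal (U t)).toReal / (x * U x)) atTop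
      (nhds (α - 1)⁻¹) := by
  have key : ∀ δ : ℝ, 0 < δ → ∀ᶠ x in atTop,
      (∫⁻ t in Ioi x, ENNReal.ofReal (U t)) ≠ ⊤ ∧
      ((α - 1)⁻¹ - δ) * (x * U x) ≤ (∫⁻ t in Ioi x, ENNReal.ofReal (U t)).toReal ∧
      (∫⁻ t in Ioi x, ENNReal.ofReal (U t)).toReal ≤ ((α - 1)⁻¹ + δ) * (x * U x) := by
    intro δ hδ
    obtain ⟨r, q₁, q₂, hr, hq1b, hq20, hq2b, hrq1, hf1, hf2⟩ := aux_exists_params α δ hα hδ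
    have hr0 : (0:ℝ) < r := by linarith
    have hq10 : 0 < q₁ := lt_trans (Real.rpow_pos_of_pos hr0 _) hq1b
    have hrq2 : r * q₂ < 1 := by nlinarith
    have hev : ∀ᶠ x in atTop, (1:ℝ) ≤ x ∧ U (r * x) / U x < q₁ ∧ q₂ < U (r * x) / U x := by
      filter_upwards [eventually_ge_atTop (1:ℝ), (hrv r hr0).eventually_lt_const hq1b,
        (hrv r hr0).eventually_const_lt hq2b] with x e1 e2 e3
      exact ⟨e1, e2, e3⟩
    rw [eventually_atTop] at hev
    obtain ⟨X₀, hX₀⟩ := hev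
    set X := max X₀ 1 with hXdef
    have hX : (0:ℝ) < X := lt_of_lt_of_le one_pos (le_max_right _ _)
    have hXall : ∀ x, X ≤ x → (1:ℝ) ≤ x ∧ U (r * x) / U x < q₁ ∧ q₂ < U (r * x) / U x :=
      fun x hx => hX₀ x (le_trans (le_max_left _ _) hx)
    have hub : ∀ x, X ≤ x → U (r * x) ≤ q₁ * U x := by
      intro x hx
      obtain ⟨h1, h2, _⟩ := hXall x hx
      have hUx : 0 < U x := hpos x (by linarith)
      exact le_of_lt ((div_lt_iff₀ hUx).1 h2)
    have hlb : ∀ x, X ≤ x → q₂ * U x ≤ U (r * x) := by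
      intro x hx
      obtain ⟨h1, _, h3⟩ := hXall x hx
      have hUx : 0 < U x := hpos x (by linarith)
      exact le_of_lt ((lt_div_iff₀ hUx).1 h3)
    have hTE := aux_TE_bounds U hmeas hanti h0 r q₁ q₂ X hr hq10 hrq1 hq20 hrq2 hX hub hlb
    rw [eventually_atTop]
    refine ⟨X, fun x hx => ?_⟩
    have hx0 : 0 < x := lt_of_lt_of_le hX hx
    have hxU : 0 ≤ x * U x := mul_nonneg hx0.le (h0 x)
    obtain ⟨hlo, hhi⟩ := hTE x hx
    have hne : (∫⁻ t in Ioi x, ENNReal.ofReal (U t)) ≠ ⊤ :=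
      ne_top_of_le_ne_top ENNReal.ofReal_ne_top hhi
    have hB : (0:ℝ) ≤ (r - 1) / (1 - r * q₁) * (x * U x) :=
      mul_nonneg (div_nonneg (by linarith) (by linarith)) hxU
    have hhi' : (∫⁻ t in Ioi x, ENNReal.ofReal (U t)).toReal ≤
        (r - 1) / (1 - r * q₁) * (x * U x) := by
      calc (∫⁻ t in Ioi x, ENNReal.ofReal (U t)).toReal
          ≤ (ENNReal.ofReal ((r - 1) / (1 - r * q₁) * (x * U x))).toReal :=
            ENNReal.toReal_mono ENNReal.ofReal_ne_top hhi
        _ = (r - 1) / (1 - r * q₁) * (x * U x) := ENNReal.toReal_ofReal hB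
    have hlo' : (r - 1) * q₂ / (1 - r * q₂) * (x * U x) ≤
        (∫⁻ t in Ioi x, ENNReal.ofReal (U t)).toReal := by
      calc (r - 1) * q₂ / (1 - r * q₂) * (x * U x)
          = (ENNReal.ofReal ((r - 1) * q₂ / (1 - r * q₂) * (x * U x))).toReal :=
            (ENNReal.toReal_ofReal
              (mul_nonneg (div_nonneg (by nlinarith) (by linarith)) hxU)).symm
        _ ≤ (∫⁻ t in Ioi x, ENNReal.ofReal (U t)).toReal := ENNReal.toReal_mono hne hlo
    refine ⟨hne, le_trans (mul_le_mul_of_nonneg_right hf2 hxU) hlo',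
      le_trans hhi' (mul_le_mul_of_nonneg_right hf1 hxU)⟩
  constructor
  · filter_upwards [key 1 one_pos] with x hx using hx.1
  · rw [Metric.tendsto_nhds]
    intro ε hε
    filter_upwards [key (ε/2) (by linarith), eventually_gt_atTop (0:ℝ)] with x hx hx0
    obtain ⟨hne, hlo, hhi⟩ := hx
    have hxU : 0 < x * U x := mul_pos hx0 (hpos x hx0)
    rw [Real.dist_eq, abs_sub_lt_iff]
    constructor
    · have := (div_le_iff₀ hxU).2 hhi
      linarith [(div_le_iff₀ hxU).2 hhi]
    · have := (le_div_iff₀ hxU).2 hlo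
      linarith

lemma aux_quantile (U : ℝ → ℝ) (hanti : Antitone U) (hpos : ∀ x, 0 < x → 0 < U x)
    (h1 : ∀ x, U x ≤ 1) (h0 : ∀ x, 0 ≤ U x) (α : ℝ) (hα : 1 < α)
    (hrv : ∀ t : ℝ, 0 < t → Tendsto (fun x : ℝ => U (t * x) / U x) atTop (nhds (t ^ (-α))))
    (a : ℕ → ℝ) (ha : ∀ n : ℕ, a n = sInf {x : ℝ | 0 ≤ x ∧ U x ≤ 1 / (n : ℝ)}) :
    Tendsto a atTop atTop ∧ Tendsto (fun n : ℕ => (n : ℝ) * U (a n)) atTop (nhds 1) := by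
  -- U gets arbitrarily small
  have hsmall : ∀ ε : ℝ, 0 < ε → ∃ x : ℝ, 0 < x ∧ U x < ε := by
    intro ε hε
    have h2a : (2:ℝ) ^ (-α) < 1 :=
      Real.rpow_lt_one_of_one_lt_of_neg one_lt_two (by linarith)
    have h2a0 : (0:ℝ) < (2:ℝ) ^ (-α) := Real.rpow_pos_of_pos two_pos _
    set q : ℝ := ((2:ℝ) ^ (-α) + 1) / 2 with hq
    have hq0 : 0 < q := by positivity
    have hq1 : q < 1 := by rw [hq]; linarith
    have hqgt : (2:ℝ) ^ (-α) < q := by rw [hq]; linarith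
    have hev : ∀ᶠ x in atTop, (1:ℝ) ≤ x ∧ U (2 * x) / U x < q := by
      filter_upwards [eventually_ge_atTop (1:ℝ), (hrv 2 two_pos).eventually_lt_const hqgt]
        with x e1 e2 using ⟨e1, e2⟩
    rw [eventually_atTop] at hev
    obtain ⟨X₀, hX₀⟩ := hev
    set X := max X₀ 1 with hXdef
    have hX1 : (1:ℝ) ≤ X := le_max_right _ _
    have hX : (0:ℝ) < X := lt_of_lt_of_le one_pos hX1
    have hstep : ∀ x, X ≤ x → U (2 * x) ≤ q * U x := by
      intro x hx
      obtain ⟨e1, e2⟩ := hX₀ x (le_trans (le_max_left _ _) hx)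
      exact le_of_lt ((div_lt_iff₀ (hpos x (by linarith))).1 e2)
    have hiter : ∀ k : ℕ, U (2 ^ k * X) ≤ q ^ k * U X := by
      intro k
      induction k with
      | zero => simp
      | succ k ih =>
        have h2k : X ≤ 2 ^ k * X :=
          le_mul_of_one_le_left hX.le (one_le_pow₀ one_le_two)
        calc U (2 ^ (k + 1) * X) = U (2 * (2 ^ k * X)) := by ring_nf
          _ ≤ q * U (2 ^ k * X) := hstep _ h2k
          _ ≤ q * (q ^ k * U X) := by nlinarith
          _ = q ^ (k + 1) * U X := by ring
    obtain ⟨k, hk⟩ := exists_pow_lt_of_lt_one hε hq1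
    refine ⟨2 ^ k * X, by positivity, lt_of_le_of_lt ?_ hk⟩
    calc U (2 ^ k * X) ≤ q ^ k * U X := hiter k
      _ ≤ q ^ k * 1 := by nlinarith [pow_pos hq0 k, h1 X]
      _ = q ^ k := mul_one _
  have hSne : ∀ n : ℕ, 1 ≤ n → ({x : ℝ | 0 ≤ x ∧ U x ≤ 1 / (n : ℝ)}).Nonempty := by
    intro n hn
    have hn0 : (0:ℝ) < 1 / (n : ℝ) := by
      have : (0:ℝ) < (n : ℝ) := by exact_mod_cast hn
      positivity
    obtain ⟨x, hx0, hx⟩ := hsmall _ hn0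
    exact ⟨x, hx0.le, hx.le⟩
  have hSbdd : ∀ n : ℕ, BddBelow {x : ℝ | 0 ≤ x ∧ U x ≤ 1 / (n : ℝ)} :=
    fun n => ⟨0, fun y hy => hy.1⟩
  -- a tends to infinity
  have hatop : Tendsto a atTop atTop := by
    rw [tendsto_atTop]
    intro M
    set M' := max M 1 with hM'
    have hM'0 : (0:ℝ) < M' := lt_of_lt_of_le one_pos (le_max_right _ _)
    obtain ⟨N₀, hN₀⟩ := exists_nat_one_div_lt (hpos M' hM'0)
    filter_upwards [eventually_ge_atTop (N₀ + 1)] with n hn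
    have hn1 : 1 ≤ n := le_trans (Nat.le_add_left 1 N₀) hn
    have hle : (1:ℝ) / n ≤ 1 / (N₀ + 1) := by
      apply one_div_le_one_div_of_le (by positivity)
      exact_mod_cast hn
    have : ∀ y ∈ {x : ℝ | 0 ≤ x ∧ U x ≤ 1 / (n : ℝ)}, M' ≤ y := by
      intro y hy
      by_contra hcon
      push_neg at hcon
      have : U M' ≤ U y := hanti hcon.le
      have : U M' ≤ 1 / (n : ℝ) := le_trans this hy.2
      have : U M' ≤ 1 / (N₀ + 1) := le_trans this hle
      exact absurd hN₀ (by push_cast at this ⊢; linarith)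
    rw [ha n]
    exact le_trans (le_max_left M 1) (le_csInf (hSne n hn1) this)
  refine ⟨hatop, ?_⟩
  have haev : ∀ᶠ n : ℕ in atTop, 1 ≤ a n := hatop.eventually_ge_atTop 1
  -- upper and lower crossing properties
  have hup : ∀ t : ℝ, 1 < t → ∀ᶠ n : ℕ in atTop, U (t * a n) ≤ 1 / (n : ℝ) := by
    intro t ht
    filter_upwards [haev, eventually_ge_atTop 1] with n han hn1
    have h0an : 0 < a n := lt_of_lt_of_le one_pos han
    have hlt : sInf {x : ℝ | 0 ≤ x ∧ U x ≤ 1 / (n : ℝ)} < t * a n := by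
      rw [← ha n]; nlinarith
    obtain ⟨y, hy, hylt⟩ := exists_lt_of_csInf_lt (hSne n hn1) hlt
    exact le_trans (hanti hylt.le) hy.2
  have hdown : ∀ s : ℝ, 0 < s → s < 1 → ∀ᶠ n : ℕ in atTop, 1 / (n : ℝ) < U (s * a n) := by
    intro s hs0 hs1
    filter_upwards [haev, eventually_ge_atTop 1] with n han hn1
    have h0an : 0 < a n := lt_of_lt_of_le one_pos han
    have hlt : s * a n < a n := by nlinarith
    have hnotmem : s * a n ∉ {x : ℝ | 0 ≤ x ∧ U x ≤ 1 / (n : ℝ)} := by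
      intro hmem
      have := csInf_le (hSbdd n) hmem
      rw [← ha n] at this
      linarith
    by_contra hcon
    push_neg at hcon
    exact hnotmem ⟨by positivity, hcon⟩
  -- conclude
  rw [Metric.tendsto_nhds]
  intro ε hε
  set δ : ℝ := min (ε / 2) (1 / 2) with hδdef
  have hδ0 : 0 < δ := lt_min (by linarith) one_half_pos
  have hδhalf : δ ≤ 1 / 2 := min_le_right _ _
  have hδε : δ ≤ ε / 2 := min_le_left _ _
  have hrpow1 : Tendsto (fun t : ℝ => t ^ (-α)) (nhds 1) (nhds 1) := by
    have h : ContinuousAt (fun t : ℝ => t ^ (-α)) 1 :=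
      Real.continuousAt_rpow_const 1 (-α) (Or.inl one_ne_zero)
    simpa [Real.one_rpow] using h.tendsto
  -- pick t > 1
  have hex_t : ∃ t : ℝ, 1 < t ∧ 1 / (1 + δ) < t ^ (-α) := by
    have hlt : 1 / (1 + δ) < (1:ℝ) := by
      rw [div_lt_one (by linarith)]; linarith
    have e1 := (tendsto_nhdsWithin_of_tendsto_nhds (s := Ioi (1:ℝ)) hrpow1).eventually_const_lt hlt
    obtain ⟨t, ht, h⟩ := (eventually_mem_nhdsWithin.and e1).exists
    exact ⟨t, ht, h⟩
  -- pick s < 1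
  have hex_s : ∃ s : ℝ, 0 < s ∧ s < 1 ∧ s ^ (-α) < 1 / (1 - δ) := by
    have hlt : (1:ℝ) < 1 / (1 - δ) := by
      rw [lt_div_iff₀ (by linarith)]; linarith
    have e1 := (tendsto_nhdsWithin_of_tendsto_nhds (s := Iio (1:ℝ)) hrpow1).eventually_lt_const hlt
    have e2 : Ioo (1/2 : ℝ) 1 ∈ nhdsWithin (1:ℝ) (Iio 1) := Ioo_mem_nhdsLT one_half_lt_one
    obtain ⟨s, hs, h⟩ := (e1.and e2).exists
    exact ⟨s, by linarith [h.1], h.2, hs⟩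
  obtain ⟨t, ht1, htα⟩ := hex_t
  obtain ⟨s, hs0, hs1, hsα⟩ := hex_s
  have hratio_t : Tendsto (fun n : ℕ => U (t * a n) / U (a n)) atTop (nhds (t ^ (-α))) :=
    (hrv t (by linarith)).comp hatop
  have hratio_s : Tendsto (fun n : ℕ => U (s * a n) / U (a n)) atTop (nhds (s ^ (-α))) :=
    (hrv s hs0).comp hatop
  filter_upwards [haev, eventually_ge_atTop 1, hup t ht1, hdown s hs0 hs1,
    hratio_t.eventually_const_lt htα, hratio_s.eventually_lt_const hsα] with n han hn1 hupn hdownn hrt hrs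
  have h0an : 0 < a n := lt_of_lt_of_le one_pos han
  have hUan : 0 < U (a n) := hpos _ h0an
  have hn0 : (0:ℝ) < (n : ℝ) := by exact_mod_cast hn1
  -- upper estimate
  have hub : (n : ℝ) * U (a n) < 1 + δ := by
    have h2 : U (a n) < (1 + δ) * U (t * a n) := by
      rw [div_lt_div_iff₀ (by linarith) hUan] at hrt
      linarith
    have h3 : (n:ℝ) * U (t * a n) ≤ 1 := by
      have h := mul_le_mul_of_nonneg_left hupn hn0.le
      rwa [mul_one_div, div_self (ne_of_gt hn0)] at h
    nlinarith [h0 (t * a n)]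
  have hlb : 1 - δ < (n : ℝ) * U (a n) := by
    have h2 : (1 - δ) * U (s * a n) < U (a n) := by
      rw [div_lt_div_iff₀ hUan (by linarith)] at hrs
      linarith
    have h4 : 1 < (n:ℝ) * U (s * a n) := by
      have h := (div_lt_iff₀ hn0).1 hdownn
      linarith
    nlinarith
  rw [Real.dist_eq, abs_sub_lt_iff]
  constructor <;> [linarith; linarith]

open MeasureTheory in
lemma aux_layercake {Ω : Type*} [MeasurableSpace Ω] (P : Measure Ω) [IsProbabilityMeasure P]
    (Y : Ω → ℝ) (hmeas : Measurable Y) (hnonneg : ∀ ω, 0 ≤ Y ω) (x : ℝ) (hx : 0 < x)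
    (hfin : (∫⁻ t in Ioi x, ENNReal.ofReal ((P {ω | Y ω > t}).toReal)) ≠ ⊤) :
    ∫ ω in {ω | x < Y ω}, Y ω ∂P =
      x * (P {ω | Y ω > x}).toReal +
        (∫⁻ t in Ioi x, ENNReal.ofReal ((P {ω | Y ω > t}).toReal)).toReal := by
  set S : Set Ω := {ω | x < Y ω} with hSdef
  have hS : MeasurableSet S := measurableSet_lt measurable_const hmeas
  set f : Ω → ℝ := S.indicator Y with hfdef
  have h2 : ∀ ω, 0 ≤ f ω := fun ω => Set.indicator_nonneg (fun a _ => hnonneg a) ω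
  have h3 : Measurable f := hmeas.indicator hS
  have h1 : ∫ ω in S, Y ω ∂P = ∫ ω, f ω ∂P := (integral_indicator hS).symm
  have h4 : ∫ ω, f ω ∂P = (∫⁻ ω, ENNReal.ofReal (f ω) ∂P).toReal :=
    integral_eq_lintegral_of_nonneg_ae (Filter.Eventually.of_forall h2)
      h3.aestronglyMeasurable
  have h5 : ∫⁻ ω, ENNReal.ofReal (f ω) ∂P = ∫⁻ t in Ioi 0, P {a | t < f a} :=
    lintegral_eq_lintegral_meas_lt P (Filter.Eventually.of_forall h2) h3.aemeasurable
  have h6 : ∀ t ∈ Ioi (0:ℝ), P {a | t < f a} =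
      ENNReal.ofReal ((P {ω | Y ω > max x t}).toReal) := by
    intro t ht
    have hseteq : {a | t < f a} = {ω | Y ω > max x t} := by
      ext a
      by_cases hax : x < Y a
      · simp only [hfdef, Set.indicator_of_mem (show a ∈ S from hax), Set.mem_setOf_eq,
          gt_iff_lt, max_lt_iff]
        tauto
      · simp only [hfdef, Set.indicator_of_notMem (show a ∉ S from hax), Set.mem_setOf_eq,
          gt_iff_lt, max_lt_iff]
        constructor
        · intro h; exact absurd (lt_trans ht h) (by simp)
        · rintro ⟨h, -⟩; exact absurd h hax
    rw [hseteq, ENNReal.ofReal_toReal (measure_ne_top P _)]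
  have hsplit : ∫⁻ t in Ioi (0:ℝ), ENNReal.ofReal ((P {ω | Y ω > max x t}).toReal) =
      (∫⁻ t in Ioc (0:ℝ) x, ENNReal.ofReal ((P {ω | Y ω > max x t}).toReal)) +
      ∫⁻ t in Ioi x, ENNReal.ofReal ((P {ω | Y ω > max x t}).toReal) := by
    rw [← lintegral_union measurableSet_Ioi (Set.Ioc_disjoint_Ioi le_rfl),
      Set.Ioc_union_Ioi_eq_Ioi hx.le]
  have hpart1 : (∫⁻ t in Ioc (0:ℝ) x, ENNReal.ofReal ((P {ω | Y ω > max x t}).toReal)) =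
      ENNReal.ofReal ((P {ω | Y ω > x}).toReal) * ENNReal.ofReal x := by
    rw [setLIntegral_congr_fun_ae measurableSet_Ioc
      (Filter.Eventually.of_forall (fun t ht => by rw [max_eq_left ht.2]))]
    rw [setLIntegral_const, Real.volume_Ioc, sub_zero]
  have hpart2 : (∫⁻ t in Ioi x, ENNReal.ofReal ((P {ω | Y ω > max x t}).toReal)) =
      ∫⁻ t in Ioi x, ENNReal.ofReal ((P {ω | Y ω > t}).toReal) := by
    apply setLIntegral_congr_fun_ae measurableSet_Ioi
    exact Filter.Eventually.of_forall (fun t ht => by rw [max_eq_right (le_of_lt ht)])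
  rw [h1, h4, h5, setLIntegral_congr_fun_ae measurableSet_Ioi (Filter.Eventually.of_forall h6),
    hsplit, hpart1, hpart2, ENNReal.toReal_add (by finiteness) hfin,
    ENNReal.toReal_mul, ENNReal.toReal_ofReal (ENNReal.toReal_nonneg),
    ENNReal.toReal_ofReal hx.le]
  ring

theorem stmt14
    {Ω : Type*} [MeasurableSpace Ω] (P : Measure Ω) [IsProbabilityMeasure P]
    (Y : Ω → ℝ) (hmeas : Measurable Y) (hnonneg : ∀ ω, 0 ≤ Y ω)
    (α : ℝ) (hα : 1 < α)
    (htailpos : ∀ x : ℝ, 0 < x → 0 < (P {ω | Y ω > x}).toReal)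
    (hrv : ∀ t : ℝ, 0 < t → Tendsto (fun x : ℝ =>
        (P {ω | Y ω > t * x}).toReal / (P {ω | Y ω > x}).toReal)
        atTop (nhds (t ^ (-α))))
    (a : ℕ → ℝ)
    (ha : ∀ n : ℕ, a n =
      sInf {x : ℝ | 0 ≤ x ∧ 1 - 1 / (n : ℝ) ≤ (P {ω | Y ω ≤ x}).toReal})
    (c : ℝ) (hc : 0 < c) :
    Tendsto (fun n : ℕ =>
        (n : ℝ) * (∫ ω in {ω | c * a n < Y ω}, Y ω ∂P) / a n)
      atTop (nhds (α / (α - 1) * c ^ (1 - α))) := by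
  set U : ℝ → ℝ := fun x => (P {ω | Y ω > x}).toReal with hUdef
  have hU_anti : Antitone U := by
    intro x y hxy
    exact ENNReal.toReal_mono (measure_ne_top P _)
      (measure_mono (fun ω hω => lt_of_le_of_lt hxy hω))
  have hU_meas : Measurable U := hU_anti.measurable
  have hU0 : ∀ x, 0 ≤ U x := fun x => ENNReal.toReal_nonneg
  have hU1 : ∀ x, U x ≤ 1 := by
    intro x
    have h := prob_le_one (μ := P) (s := {ω | Y ω > x})
    calc U x ≤ (1 : ENNReal).toReal := ENNReal.toReal_mono (by simp) h
      _ = 1 := by simp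
  have haset : ∀ n : ℕ, a n = sInf {x : ℝ | 0 ≤ x ∧ U x ≤ 1 / (n : ℝ)} := by
    intro n
    rw [ha n]
    congr 1
    ext x
    have hmS : MeasurableSet {ω | Y ω > x} := hmeas measurableSet_Ioi
    have hcompl : (P {ω | Y ω ≤ x}).toReal = 1 - U x := by
      have hset : {ω | Y ω ≤ x} = {ω | Y ω > x}ᶜ := by ext ω; simp [not_lt]
      rw [hset, prob_compl_eq_one_sub hmS,
        ENNReal.toReal_sub_of_le prob_le_one ENNReal.one_ne_top]
      simp [hUdef]
    simp only [Set.mem_setOf_eq, hcompl]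
    constructor
    · rintro ⟨h1, h2⟩; exact ⟨h1, by linarith⟩
    · rintro ⟨h1, h2⟩; exact ⟨h1, by linarith⟩
  obtain ⟨hatop, hn1⟩ := aux_quantile U hU_anti htailpos hU1 hU0 α hα hrv a haset
  obtain ⟨hfin, hkar⟩ := aux_karamata U hU_meas hU_anti hU0 htailpos α hα hrv
  set T : ℝ → ℝ := fun x => (∫⁻ t in Ioi x, ENNReal.ofReal (U t)).toReal with hTdef
  have hcatop : Tendsto (fun n : ℕ => c * a n) atTop atTop := hatop.const_mul_atTop hc
  have hckar : Tendsto (fun n : ℕ => T (c * a n) / ((c * a n) * U (c * a n))) atTop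
      (nhds (α - 1)⁻¹) := hkar.comp hcatop
  have hfinn : ∀ᶠ n : ℕ in atTop, (∫⁻ t in Ioi (c * a n), ENNReal.ofReal (U t)) ≠ ⊤ :=
    hcatop.eventually hfin
  have hratio : Tendsto (fun n : ℕ => U (c * a n) / U (a n)) atTop (nhds (c ^ (-α))) :=
    (hrv c hc).comp hatop
  have hprod : Tendsto (fun n : ℕ => ((n : ℝ) * U (a n)) * (U (c * a n) / U (a n)) * c *
      (1 + T (c * a n) / ((c * a n) * U (c * a n)))) atTop
      (nhds (1 * c ^ (-α) * c * (1 + (α - 1)⁻¹))) :=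
    ((hn1.mul hratio).mul_const c).mul (tendsto_const_nhds.add hckar)
  have hval : 1 * c ^ (-α) * c * (1 + (α - 1)⁻¹) = α / (α - 1) * c ^ (1 - α) := by
    have hα1 : α - 1 ≠ 0 := by intro h; linarith [hα]
    rw [show (1:ℝ) - α = 1 + (-α) by ring, Real.rpow_add hc, Real.rpow_one]
    field_simp
    ring
  rw [← hval]
  refine hprod.congr' ?_
  filter_upwards [hatop.eventually_ge_atTop 1, eventually_ge_atTop 1, hfinn]
    with n han hn1' hfinna
  have h0an : 0 < a n := lt_of_lt_of_le one_pos han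
  have h0can : 0 < c * a n := mul_pos hc h0an
  have hUan : 0 < U (a n) := htailpos _ h0an
  have hUcan : 0 < U (c * a n) := htailpos _ h0can
  have hlc := aux_layercake P Y hmeas hnonneg (c * a n) h0can hfinna
  rw [hlc]
  have hTn : (∫⁻ t in Ioi (c * a n), ENNReal.ofReal (U t)).toReal = T (c * a n) := rfl
  rw [hTn]
  field_simp
  ring
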